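/- Under the two-component Gaussian mixture model x ∼ α_1 N_p(μ_1, Σ) + α_2 N_p(μ_2, Σ) with α_1 ∈ {1/2 − 1/√12, 1/2 + 1/√12}, the excess kurtosis of every projection vanishes: κ(u) − 3 = 0 for all unit vectors u, where κ(u) = E[(u'(x − Ex))^4]/(E[(u'(x − Ex))^2])^2. -/

import Mathlib

open MeasureTheory ProbabilityTheory Matrix

/-- A `p`-variate Gaussian measure with mean `m` and covariance `S` (positive semidefinite),
realized as the pushforward of a standard Gaussian by `w ↦ m + S^{1/2} w`. -/
noncomputable def mvGaussian {p : ℕ} (m : Fin p → ℝ) {S : Matrix (Fin p) (Fin p) ℝ}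
    (hS : S.PosSemidef) : Measure (Fin p → ℝ) :=
  (Measure.pi fun _ : Fin p => gaussianReal 0 1).map fun w => m + ((hS.1.eigenvectorUnitary : Matrix (Fin p) (Fin p) ℝ) *
      diagonal (((↑) : ℝ → ℝ) ∘ (√·) ∘ hS.1.eigenvalues) *
      (star hS.1.eigenvectorUnitary : Matrix (Fin p) (Fin p) ℝ)).mulVec w

noncomputable abbrev psdSqrt {p : ℕ} {S : Matrix (Fin p) (Fin p) ℝ} (hS : S.PosSemidef) :
    Matrix (Fin p) (Fin p) ℝ :=
  (hS.1.eigenvectorUnitary : Matrix (Fin p) (Fin p) ℝ) *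
      diagonal (((↑) : ℝ → ℝ) ∘ (√·) ∘ hS.1.eigenvalues) *
      (star hS.1.eigenvectorUnitary : Matrix (Fin p) (Fin p) ℝ)

lemma psdSqrt_mul_self {p : ℕ} {S : Matrix (Fin p) (Fin p) ℝ} (hS : S.PosSemidef) :
    psdSqrt hS * psdSqrt hS = S := by
  conv_rhs => rw [hS.1.spectral_theorem, Unitary.conjStarAlgAut_apply]
  have hU : (star hS.1.eigenvectorUnitary : Matrix (Fin p) (Fin p) ℝ) *
      (hS.1.eigenvectorUnitary : Matrix (Fin p) (Fin p) ℝ) = 1 := by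
    simpa using Unitary.star_mul_self hS.1.eigenvectorUnitary
  have hD : diagonal (((↑) : ℝ → ℝ) ∘ (√·) ∘ hS.1.eigenvalues) *
      diagonal (((↑) : ℝ → ℝ) ∘ (√·) ∘ hS.1.eigenvalues)
      = diagonal (RCLike.ofReal ∘ hS.1.eigenvalues) := by
    rw [diagonal_mul_diagonal]
    congr 1
    funext i
    simp [Real.mul_self_sqrt (hS.eigenvalues_nonneg i)]
  simp only [psdSqrt]
  rw [show ∀ X Y Z W V : Matrix (Fin p) (Fin p) ℝ, X * Y * Z * (W * Y * V) = X * Y * (Z * W) * Y * V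
    from fun X Y Z W V => by simp only [Matrix.mul_assoc], hU, Matrix.mul_one, Matrix.mul_assoc _ _ (diagonal _), hD]



section Helpers

open Real Filter
open scoped ENNReal NNReal

noncomputable def γ : Measure ℝ := gaussianReal 0 1

instance : IsProbabilityMeasure γ := by unfold γ; infer_instance

-- tendsto of x^n * exp(-x^2/2) at top
lemma tendsto_pow_exp_atTop (n : ℕ) :
    Tendsto (fun x : ℝ => x ^ n * Real.exp (-(2⁻¹ : ℝ) * x ^ 2)) atTop (nhds 0) := by
  have h := rpow_mul_exp_neg_mul_sq_isLittleO_exp_neg (by norm_num : (0:ℝ) < 2⁻¹) n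
  have heq : (fun x : ℝ => x ^ (n : ℝ) * Real.exp (-(2⁻¹:ℝ) * x ^ 2))
      = fun x : ℝ => x ^ n * Real.exp (-(2⁻¹:ℝ) * x ^ 2) := by
    funext x; rw [Real.rpow_natCast]
  rw [heq] at h
  refine h.isBigO.trans_tendsto ?_
  have : Tendsto (fun x : ℝ => -(1/2:ℝ) * x) atTop atBot := by
    apply Tendsto.const_mul_atTop_of_neg (by norm_num) tendsto_id
  exact Real.tendsto_exp_atBot.comp this

lemma integrable_pow_mul_exp (n : ℕ) :
    Integrable (fun x : ℝ => x ^ n * Real.exp (-(2⁻¹:ℝ) * x ^ 2)) := by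
  have h := integrable_rpow_mul_exp_neg_mul_sq (by norm_num : (0:ℝ) < 2⁻¹)
    (s := n) (by exact lt_of_lt_of_le (by norm_num) (Nat.cast_nonneg n))
  have heq : (fun x : ℝ => x ^ (n : ℝ) * Real.exp (-(2⁻¹:ℝ) * x ^ 2))
      = fun x : ℝ => x ^ n * Real.exp (-(2⁻¹:ℝ) * x ^ 2) := by
    funext x; rw [Real.rpow_natCast]
  rwa [heq] at h

lemma gauss_moment_recur (n : ℕ) :
    ∫ x : ℝ, x ^ (n + 2) * Real.exp (-(2⁻¹:ℝ) * x ^ 2)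
      = (n + 1 : ℝ) * ∫ x : ℝ, x ^ n * Real.exp (-(2⁻¹:ℝ) * x ^ 2) := by
  set e : ℝ → ℝ := fun x => Real.exp (-(2⁻¹:ℝ) * x ^ 2) with he
  set F : ℝ → ℝ := fun x => -(x ^ (n + 1) * e x) with hF
  set F' : ℝ → ℝ := fun x => x ^ (n + 2) * e x - (n + 1 : ℝ) * (x ^ n * e x) with hF'
  have hderiv : ∀ x : ℝ, HasDerivAt F (F' x) x := by
    intro x
    have h1 : HasDerivAt (fun x : ℝ => x ^ (n + 1)) ((n + 1 : ℝ) * x ^ n) x := by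
      simpa using hasDerivAt_pow (n + 1) x
    have h2 : HasDerivAt e (e x * (-(2⁻¹:ℝ) * (2 * x))) x := by
      have : HasDerivAt (fun x : ℝ => -(2⁻¹:ℝ) * x ^ 2) (-(2⁻¹:ℝ) * (2 * x)) x := by
        simpa using (hasDerivAt_pow 2 x).const_mul (-(2⁻¹:ℝ))
      simpa [he] using this.exp
    have := (h1.mul h2).neg
    refine this.congr_deriv ?_
    simp only [hF', pow_succ]
    ring
  have htop : Tendsto F atTop (nhds 0) := by
    have h := (tendsto_pow_exp_atTop (n + 1)).neg
    rw [neg_zero] at h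
    exact h
  have hbot : Tendsto F atBot (nhds 0) := by
    have h1 : Tendsto (fun y : ℝ => F (-y)) atTop (nhds 0) := by
      have heq : (fun y : ℝ => F (-y)) = fun y => ((-1:ℝ) ^ n) * (y ^ (n+1) * e y) := by
        funext y
        show -((-y) ^ (n+1) * e (-y)) = _
        have h1 : e (-y) = e y := by simp only [he]; norm_num
        rw [h1, neg_pow, pow_succ]
        ring
      rw [heq]
      have h := (tendsto_pow_exp_atTop (n + 1)).const_mul ((-1:ℝ) ^ n)
      rw [mul_zero] at h
      exact h
    have h2 : Tendsto (fun x : ℝ => -x) atBot atTop := tendsto_neg_atBot_atTop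
    exact Tendsto.congr (fun x => congrArg F (neg_neg x)) (h1.comp h2)
  have hint2 : Integrable F' := by
    exact (integrable_pow_mul_exp (n+2)).sub ((integrable_pow_mul_exp n).const_mul ((n:ℝ)+1))
  have key : ∫ x : ℝ, F' x = 0 := by
    rw [← intervalIntegral.integral_Iic_add_Ioi (b := (0:ℝ)) (hint2.integrableOn) (hint2.integrableOn)]
    rw [integral_Iic_of_hasDerivAt_of_tendsto' (fun x _ => hderiv x) hint2.integrableOn hbot]
    rw [integral_Ioi_of_hasDerivAt_of_tendsto' (fun x _ => hderiv x) hint2.integrableOn htop]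
    ring
  have := integral_sub (integrable_pow_mul_exp (n+2)) ((integrable_pow_mul_exp n).const_mul ((n:ℝ)+1))
  simp only [hF', he] at key
  rw [show (fun x : ℝ => x ^ (n + 2) * Real.exp (-(2⁻¹:ℝ) * x ^ 2) - (↑n + 1) * (x ^ n * Real.exp (-(2⁻¹:ℝ) * x ^ 2))) = fun x => x ^ (n + 2) * Real.exp (-(2⁻¹:ℝ) * x ^ 2) - ((↑n + 1) * (x ^ n * Real.exp (-(2⁻¹:ℝ) * x ^ 2))) from rfl] at key
  rw [integral_sub (integrable_pow_mul_exp (n+2)) (((integrable_pow_mul_exp n).const_mul _))] at key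
  rw [integral_const_mul] at key
  linarith [key]

lemma K0_val : ∫ x : ℝ, Real.exp (-(2⁻¹:ℝ) * x ^ 2) = Real.sqrt (2 * π) := by
  rw [integral_gaussian (2⁻¹ : ℝ), show (π / 2⁻¹ : ℝ) = 2 * π by ring]

lemma K1_val : ∫ x : ℝ, x ^ 1 * Real.exp (-(2⁻¹:ℝ) * x ^ 2) = 0 := by
  set e : ℝ → ℝ := fun x => Real.exp (-(2⁻¹:ℝ) * x ^ 2) with he
  set F : ℝ → ℝ := fun x => -(e x) with hF
  have hderiv : ∀ x : ℝ, HasDerivAt F (x ^ 1 * e x) x := by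
    intro x
    have h2 : HasDerivAt e (e x * (-(2⁻¹:ℝ) * (2 * x))) x := by
      have : HasDerivAt (fun x : ℝ => -(2⁻¹:ℝ) * x ^ 2) (-(2⁻¹:ℝ) * (2 * x)) x := by
        simpa using (hasDerivAt_pow 2 x).const_mul (-(2⁻¹:ℝ))
      simpa [he] using this.exp
    have := h2.neg
    refine this.congr_deriv ?_
    ring
  have htop : Tendsto F atTop (nhds 0) := by
    have h := (tendsto_pow_exp_atTop 0).neg
    rw [neg_zero] at h
    refine h.congr fun x => ?_
    simp [hF, he]
  have hbot : Tendsto F atBot (nhds 0) := by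
    have h2 : Tendsto (fun x : ℝ => -x) atBot atTop := tendsto_neg_atBot_atTop
    have h1 : Tendsto (fun y : ℝ => F (-y)) atTop (nhds 0) := by
      have heq : (fun y : ℝ => F (-y)) = fun y => -(1 * (y ^ 0 * e y)) := by
        funext y
        show -(e (-y)) = _
        have h1 : e (-y) = e y := by simp only [he]; norm_num
        rw [h1]; ring
      rw [heq]
      have h := ((tendsto_pow_exp_atTop 0).const_mul (1:ℝ)).neg
      rw [mul_zero, neg_zero] at h
      exact h
    exact Tendsto.congr (fun x => congrArg F (neg_neg x)) (h1.comp h2)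
  have hint2 : Integrable (fun x : ℝ => x ^ 1 * e x) := integrable_pow_mul_exp 1
  rw [← intervalIntegral.integral_Iic_add_Ioi (b := (0:ℝ)) (hint2.integrableOn) (hint2.integrableOn)]
  rw [integral_Iic_of_hasDerivAt_of_tendsto' (fun x _ => hderiv x) hint2.integrableOn hbot]
  rw [integral_Ioi_of_hasDerivAt_of_tendsto' (fun x _ => hderiv x) hint2.integrableOn htop]
  ring

lemma gaussianPDFReal_pt (x : ℝ) :
    gaussianPDFReal 0 1 x = (Real.sqrt (2 * π))⁻¹ * Real.exp (-(2⁻¹:ℝ) * x ^ 2) := by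
  rw [gaussianPDFReal]
  norm_num
  left
  ring

lemma integral_fun_gaussianReal (f : ℝ → ℝ) (hf : Measurable f) :
    ∫ x, f x ∂γ = (Real.sqrt (2 * π))⁻¹ * ∫ x, f x * Real.exp (-(2⁻¹:ℝ) * x ^ 2) := by
  have hmeas : Measurable fun x : ℝ => (gaussianPDFReal 0 1 x).toNNReal :=
    (measurable_gaussianPDFReal 0 1).real_toNNReal
  have hγ : γ = volume.withDensity fun x => ((gaussianPDFReal 0 1 x).toNNReal : ℝ≥0∞) := by
    rw [γ, gaussianReal_of_var_ne_zero 0 one_ne_zero]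
    rfl
  rw [hγ, integral_withDensity_eq_integral_smul hmeas f]
  have hpt : ∀ x : ℝ, (gaussianPDFReal 0 1 x).toNNReal • f x
      = (Real.sqrt (2 * π))⁻¹ * (f x * Real.exp (-(2⁻¹:ℝ) * x ^ 2)) := by
    intro x
    rw [NNReal.smul_def, smul_eq_mul, Real.coe_toNNReal _ (gaussianPDFReal_nonneg 0 1 x),
      gaussianPDFReal_pt]
    ring
  simp_rw [hpt]
  rw [integral_const_mul]

lemma integrable_fun_gaussianReal (f : ℝ → ℝ) (hf : Measurable f)
    (h : Integrable fun x => f x * Real.exp (-(2⁻¹:ℝ) * x ^ 2)) :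
    Integrable f γ := by
  have hmeas : Measurable fun x : ℝ => (gaussianPDFReal 0 1 x).toNNReal :=
    (measurable_gaussianPDFReal 0 1).real_toNNReal
  have hγ : γ = volume.withDensity fun x => ((gaussianPDFReal 0 1 x).toNNReal : ℝ≥0∞) := by
    rw [γ, gaussianReal_of_var_ne_zero 0 one_ne_zero]
    rfl
  rw [hγ, integrable_withDensity_iff_integrable_smul hmeas]
  have hpt : ∀ x : ℝ, (gaussianPDFReal 0 1 x).toNNReal • f x
      = (Real.sqrt (2 * π))⁻¹ * (f x * Real.exp (-(2⁻¹:ℝ) * x ^ 2)) := by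
    intro x
    rw [NNReal.smul_def, smul_eq_mul, Real.coe_toNNReal _ (gaussianPDFReal_nonneg 0 1 x),
      gaussianPDFReal_pt]
    ring
  simp_rw [hpt]
  exact h.const_mul _

lemma integrable_pow_gaussian (n : ℕ) : Integrable (fun x : ℝ => x ^ n) γ :=
  integrable_fun_gaussianReal _ (by fun_prop) (integrable_pow_mul_exp n)

lemma sqrt_two_pi_pos : (0:ℝ) < Real.sqrt (2 * π) := Real.sqrt_pos.2 (by positivity)

lemma gauss_mom1 : ∫ x, x ^ 1 ∂γ = 0 := by
  rw [integral_fun_gaussianReal (fun x => x ^ 1) (by fun_prop), K1_val, mul_zero]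

lemma gauss_mom2 : ∫ x, x ^ 2 ∂γ = 1 := by
  rw [integral_fun_gaussianReal (fun x => x ^ 2) (by fun_prop),
    show ((2:ℕ):ℕ) = 0 + 2 from rfl, gauss_moment_recur 0]
  simp_rw [pow_zero, one_mul]
  rw [K0_val]
  field_simp
  simp

lemma gauss_mom3 : ∫ x, x ^ 3 ∂γ = 0 := by
  rw [integral_fun_gaussianReal (fun x => x ^ 3) (by fun_prop),
    show (3:ℕ) = 1 + 2 from rfl, gauss_moment_recur 1, K1_val]
  ring

lemma gauss_mom4 : ∫ x, x ^ 4 ∂γ = 3 := by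
  have h0 : ∫ x : ℝ, x ^ 2 * Real.exp (-(2⁻¹:ℝ) * x ^ 2)
      = (((0:ℕ):ℝ) + 1) * ∫ x : ℝ, x ^ 0 * Real.exp (-(2⁻¹:ℝ) * x ^ 2) := gauss_moment_recur 0
  rw [integral_fun_gaussianReal (fun x => x ^ 4) (by fun_prop),
    show (4:ℕ) = 2 + 2 from rfl, gauss_moment_recur 2,
    h0]
  simp_rw [pow_zero, one_mul]
  rw [K0_val]
  have := sqrt_two_pi_pos.ne'
  field_simp
  ring

lemma integrable_affine_pow (b c : ℝ) (k : ℕ) :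
    Integrable (fun x : ℝ => (b + c * x) ^ k) γ := by
  have he : (fun x : ℝ => (b + c * x) ^ k)
      = fun x => ∑ i ∈ Finset.range (k + 1),
          (b ^ i * c ^ (k - i) * (Nat.choose k i : ℝ)) * x ^ (k - i) := by
    funext x
    rw [add_pow]
    refine Finset.sum_congr rfl fun i _ => ?_
    rw [mul_pow]
    ring
  rw [he]
  exact integrable_finset_sum _ fun i _ => (integrable_pow_gaussian _).const_mul _

lemma J1 (b c : ℝ) : ∫ x, (b + c * x) ∂γ = b := by
  have h1 : Integrable (fun x : ℝ => c * x ^ 1) γ := (integrable_pow_gaussian 1).const_mul c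
  have he : (fun x : ℝ => b + c * x) = fun x => b + c * x ^ 1 := funext fun x => by ring
  rw [he, integral_add (integrable_const b) h1, integral_const, integral_const_mul, gauss_mom1]
  simp [measure_univ]

lemma J2 (b c : ℝ) : ∫ x, (b + c * x) ^ 2 ∂γ = b ^ 2 + c ^ 2 := by
  have h1 : Integrable (fun x : ℝ => 2 * b * c * x ^ 1) γ :=
    (integrable_pow_gaussian 1).const_mul _
  have h2 : Integrable (fun x : ℝ => c ^ 2 * x ^ 2) γ := (integrable_pow_gaussian 2).const_mul _
  have he : (fun x : ℝ => (b + c * x) ^ 2)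
      = fun x => b ^ 2 + (2 * b * c * x ^ 1 + c ^ 2 * x ^ 2) := funext fun x => by ring
  have h12 : Integrable (fun x : ℝ => 2 * b * c * x ^ 1 + c ^ 2 * x ^ 2) γ := h1.add h2
  rw [he, integral_add (integrable_const _) h12, integral_add h1 h2, integral_const,
    integral_const_mul, integral_const_mul, gauss_mom1, gauss_mom2]
  simp [measure_univ]

lemma J4 (b c : ℝ) : ∫ x, (b + c * x) ^ 4 ∂γ = b ^ 4 + 6 * b ^ 2 * c ^ 2 + 3 * c ^ 4 := by
  have h1 : Integrable (fun x : ℝ => 4 * b ^ 3 * c * x ^ 1) γ :=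
    (integrable_pow_gaussian 1).const_mul _
  have h2 : Integrable (fun x : ℝ => 6 * b ^ 2 * c ^ 2 * x ^ 2) γ :=
    (integrable_pow_gaussian 2).const_mul _
  have h3 : Integrable (fun x : ℝ => 4 * b * c ^ 3 * x ^ 3) γ :=
    (integrable_pow_gaussian 3).const_mul _
  have h4 : Integrable (fun x : ℝ => c ^ 4 * x ^ 4) γ := (integrable_pow_gaussian 4).const_mul _
  have he : (fun x : ℝ => (b + c * x) ^ 4)
      = fun x => b ^ 4 + (4 * b ^ 3 * c * x ^ 1 + (6 * b ^ 2 * c ^ 2 * x ^ 2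
          + (4 * b * c ^ 3 * x ^ 3 + c ^ 4 * x ^ 4))) := funext fun x => by ring
  have h34 : Integrable (fun x : ℝ => 4 * b * c ^ 3 * x ^ 3 + c ^ 4 * x ^ 4) γ := h3.add h4
  have h234 : Integrable (fun x : ℝ => 6 * b ^ 2 * c ^ 2 * x ^ 2
      + (4 * b * c ^ 3 * x ^ 3 + c ^ 4 * x ^ 4)) γ := h2.add h34
  have h1234 : Integrable (fun x : ℝ => 4 * b ^ 3 * c * x ^ 1 + (6 * b ^ 2 * c ^ 2 * x ^ 2
      + (4 * b * c ^ 3 * x ^ 3 + c ^ 4 * x ^ 4))) γ := h1.add h234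
  rw [he, integral_add (integrable_const _) h1234,
    integral_add h1 h234, integral_add h2 h34, integral_add h3 h4,
    integral_const, integral_const_mul, integral_const_mul, integral_const_mul, integral_const_mul,
    gauss_mom1, gauss_mom2, gauss_mom3, gauss_mom4]
  simp [measure_univ]
  ring

open Matrix

noncomputable def Pi' (p : ℕ) : Measure (Fin p → ℝ) := Measure.pi fun _ => γ

instance (p : ℕ) : IsProbabilityMeasure (Pi' p) := by unfold Pi'; infer_instance

instance (p : ℕ) : SigmaFinite (Pi' p) := by unfold Pi'; infer_instance

lemma pi_mom (p : ℕ) : ∀ (v : Fin p → ℝ) (b : ℝ),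
    Integrable (fun w => (b + v ⬝ᵥ w) ^ 2) (Pi' p) ∧
    Integrable (fun w => (b + v ⬝ᵥ w) ^ 4) (Pi' p) ∧
    (∫ w, (b + v ⬝ᵥ w) ^ 2 ∂(Pi' p) = b ^ 2 + v ⬝ᵥ v) ∧
    (∫ w, (b + v ⬝ᵥ w) ^ 4 ∂(Pi' p)
      = b ^ 4 + 6 * b ^ 2 * (v ⬝ᵥ v) + 3 * (v ⬝ᵥ v) ^ 2) := by
  induction p with
  | zero =>
      intro v b
      have hd : ∀ w : Fin 0 → ℝ, v ⬝ᵥ w = 0 := fun w => by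
        simp [dotProduct]
      have hvv : v ⬝ᵥ v = 0 := hd v
      simp only [hd, hvv, add_zero]
      refine ⟨integrable_const _, integrable_const _, ?_, ?_⟩ <;>
        · rw [integral_const]; simp [measure_univ]
  | succ p IH =>
      intro v b
      set vt : Fin p → ℝ := fun j => v j.succ with hvt
      set S : ℝ := vt ⬝ᵥ vt with hS
      set e := MeasurableEquiv.piFinSuccAbove (fun _ : Fin (p+1) => ℝ) 0 with he
      have hmp : MeasurePreserving e (Pi' (p+1)) (γ.prod (Pi' p)) :=
        measurePreserving_piFinSuccAbove (fun _ => γ) 0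
      have hd : ∀ w : Fin (p+1) → ℝ, b + v ⬝ᵥ w
          = (b + v 0 * w 0) + vt ⬝ᵥ (fun j => w j.succ) := by
        intro w
        simp only [dotProduct, Fin.sum_univ_succ, hvt]
        ring
      have happ : ∀ w : Fin (p+1) → ℝ, e w = (w 0, fun j : Fin p => w j.succ) := by
        intro w
        simp only [he, MeasurableEquiv.piFinSuccAbove_apply, Fin.insertNthEquiv,
          Equiv.coe_fn_symm_mk, Fin.removeNth]
        exact Prod.ext rfl (funext fun j => congrArg w (Fin.succAbove_zero ▸ rfl))
      -- the two functions on the product space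
      set F2 : ℝ × (Fin p → ℝ) → ℝ := fun z => ((b + v 0 * z.1) + vt ⬝ᵥ z.2) ^ 2 with hF2
      set F4 : ℝ × (Fin p → ℝ) → ℝ := fun z => ((b + v 0 * z.1) + vt ⬝ᵥ z.2) ^ 4 with hF4
      have hdotc : Continuous fun z : ℝ × (Fin p → ℝ) => vt ⬝ᵥ z.2 := by
        unfold dotProduct
        exact continuous_finset_sum _ fun j _ =>
          continuous_const.mul ((continuous_apply j).comp continuous_snd)
      have hbase : Continuous fun z : ℝ × (Fin p → ℝ) => (b + v 0 * z.1) + vt ⬝ᵥ z.2 :=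
        (continuous_const.add (continuous_const.mul continuous_fst)).add hdotc
      have hc2 : Continuous F2 := hbase.pow 2
      have hc4 : Continuous F4 := hbase.pow 4
      -- integrability on the product
      have hint2 : Integrable F2 (γ.prod (Pi' p)) := by
        refine (integrable_prod_iff hc2.aestronglyMeasurable).2 ⟨?_, ?_⟩
        · exact Filter.Eventually.of_forall fun x => (IH vt (b + v 0 * x)).1
        · have hnorm : (fun x : ℝ => ∫ y, ‖F2 (x, y)‖ ∂(Pi' p))
              = fun x => (b + v 0 * x) ^ 2 + S := by
            funext x
            rw [show (fun y => ‖F2 (x, y)‖) = fun y => ((b + v 0 * x) + vt ⬝ᵥ y) ^ 2 from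
              funext fun y => by rw [Real.norm_eq_abs, abs_of_nonneg (by positivity)]]
            exact (IH vt (b + v 0 * x)).2.2.1
          rw [hnorm]
          exact (integrable_affine_pow b (v 0) 2).add (integrable_const S)
      have hint4 : Integrable F4 (γ.prod (Pi' p)) := by
        refine (integrable_prod_iff hc4.aestronglyMeasurable).2 ⟨?_, ?_⟩
        · exact Filter.Eventually.of_forall fun x => (IH vt (b + v 0 * x)).2.1
        · have hnorm : (fun x : ℝ => ∫ y, ‖F4 (x, y)‖ ∂(Pi' p))
              = fun x => (b + v 0 * x) ^ 4 + ((6 * S) * (b + v 0 * x) ^ 2 + 3 * S ^ 2) := by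
            funext x
            rw [show (fun y => ‖F4 (x, y)‖) = fun y => ((b + v 0 * x) + vt ⬝ᵥ y) ^ 4 from
              funext fun y => by rw [Real.norm_eq_abs, abs_of_nonneg (by positivity)]]
            rw [(IH vt (b + v 0 * x)).2.2.2]
            ring
          rw [hnorm]
          have g2 : Integrable (fun x : ℝ => 6 * S * (b + v 0 * x) ^ 2) γ :=
            (integrable_affine_pow b (v 0) 2).const_mul (6 * S)
          have g3 : Integrable (fun x : ℝ => 6 * S * (b + v 0 * x) ^ 2 + 3 * S ^ 2) γ :=
            g2.add (integrable_const _)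
          exact (integrable_affine_pow b (v 0) 4).add g3
      -- transfer along e
      have hcompeq2 : (fun w : Fin (p+1) → ℝ => (b + v ⬝ᵥ w) ^ 2) = fun w => F2 (e w) := by
        funext w; rw [happ w, hF2]; simp only; rw [hd w]
      have hcompeq4 : (fun w : Fin (p+1) → ℝ => (b + v ⬝ᵥ w) ^ 4) = fun w => F4 (e w) := by
        funext w; rw [happ w, hF4]; simp only; rw [hd w]
      have hvv : v ⬝ᵥ v = v 0 ^ 2 + S := by
        simp only [dotProduct, Fin.sum_univ_succ, hS, hvt]
        ring
      have htrans2 : Integrable (fun w => (b + v ⬝ᵥ w) ^ 2) (Pi' (p+1)) := by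
        rw [hcompeq2]
        exact (hmp.integrable_comp hc2.aestronglyMeasurable).2 hint2
      have htrans4 : Integrable (fun w => (b + v ⬝ᵥ w) ^ 4) (Pi' (p+1)) := by
        rw [hcompeq4]
        exact (hmp.integrable_comp hc4.aestronglyMeasurable).2 hint4
      refine ⟨htrans2, htrans4, ?_, ?_⟩
      · rw [hcompeq2, hmp.integral_comp e.measurableEmbedding F2, integral_prod _ hint2]
        have hin : ∀ x : ℝ, ∫ y, F2 (x, y) ∂(Pi' p) = (b + v 0 * x) ^ 2 + S :=
          fun x => (IH vt (b + v 0 * x)).2.2.1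
        simp_rw [hin]
        rw [integral_add (integrable_affine_pow b (v 0) 2) (integrable_const S),
          J2, integral_const]
        simp [measure_univ, hvv]
        ring
      · rw [hcompeq4, hmp.integral_comp e.measurableEmbedding F4, integral_prod _ hint4]
        have hin : ∀ x : ℝ, ∫ y, F4 (x, y) ∂(Pi' p)
            = (b + v 0 * x) ^ 4 + ((6 * S) * (b + v 0 * x) ^ 2 + 3 * S ^ 2) := by
          intro x
          rw [(IH vt (b + v 0 * x)).2.2.2]
          ring
        simp_rw [hin]
        have g2 : Integrable (fun x : ℝ => 6 * S * (b + v 0 * x) ^ 2) γ :=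
          (integrable_affine_pow b (v 0) 2).const_mul (6 * S)
        have g3 : Integrable (fun x : ℝ => 6 * S * (b + v 0 * x) ^ 2 + 3 * S ^ 2) γ :=
          g2.add (integrable_const _)
        rw [integral_add (integrable_affine_pow b (v 0) 4) g3,
          integral_add g2 (integrable_const _),
          integral_const_mul, J4, J2, integral_const]
        simp [measure_univ, hvv]
        ring

lemma cont_dot (p : ℕ) (v : Fin p → ℝ) : Continuous fun w : Fin p → ℝ => v ⬝ᵥ w := by
  unfold dotProduct
  exact continuous_finset_sum _ fun j _ => continuous_const.mul (continuous_apply j)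

lemma pi_int1 (p : ℕ) (v : Fin p → ℝ) (b : ℝ) :
    Integrable (fun w => b + v ⬝ᵥ w) (Pi' p) := by
  have hg : Integrable (fun w => 1 + (b + v ⬝ᵥ w) ^ 2) (Pi' p) :=
    (integrable_const 1).add (pi_mom p v b).1
  refine hg.mono' (continuous_const.add (cont_dot p v)).aestronglyMeasurable ?_
  refine Filter.Eventually.of_forall fun w => ?_
  rw [Real.norm_eq_abs]
  nlinarith [sq_nonneg (|b + v ⬝ᵥ w| - 1), abs_nonneg (b + v ⬝ᵥ w), sq_abs (b + v ⬝ᵥ w)]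

lemma pi_m1 (p : ℕ) : ∀ (v : Fin p → ℝ) (b : ℝ), ∫ w, (b + v ⬝ᵥ w) ∂(Pi' p) = b := by
  induction p with
  | zero =>
      intro v b
      have hd : ∀ w : Fin 0 → ℝ, v ⬝ᵥ w = 0 := fun w => by simp [dotProduct]
      simp only [hd, add_zero]
      rw [integral_const]; simp [measure_univ]
  | succ p IH =>
      intro v b
      set vt : Fin p → ℝ := fun j => v j.succ with hvt
      set e := MeasurableEquiv.piFinSuccAbove (fun _ : Fin (p+1) => ℝ) 0 with he
      have hmp : MeasurePreserving e (Pi' (p+1)) (γ.prod (Pi' p)) :=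
        measurePreserving_piFinSuccAbove (fun _ => γ) 0
      have hd : ∀ w : Fin (p+1) → ℝ, b + v ⬝ᵥ w
          = (b + v 0 * w 0) + vt ⬝ᵥ (fun j => w j.succ) := by
        intro w
        simp only [dotProduct, Fin.sum_univ_succ, hvt]
        ring
      have happ : ∀ w : Fin (p+1) → ℝ, e w = (w 0, fun j : Fin p => w j.succ) := by
        intro w
        simp only [he, MeasurableEquiv.piFinSuccAbove_apply, Fin.insertNthEquiv,
          Equiv.coe_fn_symm_mk, Fin.removeNth]
        exact Prod.ext rfl (funext fun j => congrArg w (Fin.succAbove_zero ▸ rfl))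
      set F : ℝ × (Fin p → ℝ) → ℝ := fun z => (b + v 0 * z.1) + vt ⬝ᵥ z.2 with hF
      have hcF : Continuous F :=
        (continuous_const.add (continuous_const.mul continuous_fst)).add
          ((cont_dot p vt).comp continuous_snd)
      have hcompeq : (fun w : Fin (p+1) → ℝ => b + v ⬝ᵥ w) = fun w => F (e w) := by
        funext w; rw [happ w, hF]; simp only; rw [hd w]
      have hFint : Integrable F (γ.prod (Pi' p)) := by
        refine (hmp.integrable_comp hcF.aestronglyMeasurable).1 ?_
        have := pi_int1 (p+1) v b
        rwa [hcompeq] at this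
      rw [hcompeq, hmp.integral_comp e.measurableEmbedding F, integral_prod _ hFint]
      have hin : ∀ x : ℝ, ∫ y, F (x, y) ∂(Pi' p) = b + v 0 * x :=
        fun x => IH vt (b + v 0 * x)
      simp_rw [hin]
      exact J1 b (v 0)

lemma pi_eq (p : ℕ) : (Measure.pi fun _ : Fin p => gaussianReal 0 1) = Pi' p := rfl

lemma mulVec_cont {p : ℕ} (A : Matrix (Fin p) (Fin p) ℝ) :
    Continuous fun w : Fin p → ℝ => A.mulVec w :=
  continuous_pi fun i => cont_dot p (A i)

lemma affine_cont {p : ℕ} (mv : Fin p → ℝ) (A : Matrix (Fin p) (Fin p) ℝ) :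
    Continuous fun w : Fin p → ℝ => mv + A.mulVec w :=
  continuous_const.add (mulVec_cont A)

lemma mv_integral_eq {p : ℕ} (mv : Fin p → ℝ) {S : Matrix (Fin p) (Fin p) ℝ}
    (hS : S.PosSemidef) (f : (Fin p → ℝ) → ℝ) (hf : Continuous f) :
    ∫ z, f z ∂(mvGaussian mv hS) = ∫ w, f (mv + (psdSqrt hS).mulVec w) ∂(Pi' p) := by
  rw [mvGaussian, pi_eq,
    integral_map (affine_cont mv (psdSqrt hS)).measurable.aemeasurable hf.aestronglyMeasurable]

lemma mv_integrable_iff {p : ℕ} (mv : Fin p → ℝ) {S : Matrix (Fin p) (Fin p) ℝ}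
    (hS : S.PosSemidef) (f : (Fin p → ℝ) → ℝ) (hf : Continuous f) :
    Integrable f (mvGaussian mv hS)
      ↔ Integrable (fun w => f (mv + (psdSqrt hS).mulVec w)) (Pi' p) := by
  rw [mvGaussian, pi_eq,
    integrable_map_measure hf.aestronglyMeasurable (affine_cont mv (psdSqrt hS)).measurable.aemeasurable]
  rfl

lemma integrable_coord (p : ℕ) (j : Fin p) : Integrable (fun w => w j) (Pi' p) := by
  refine (pi_int1 p (Pi.single j 1) 0).congr (Filter.Eventually.of_forall fun w => ?_)
  show 0 + Pi.single j 1 ⬝ᵥ w = w j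
  rw [zero_add, single_dotProduct, one_mul]

lemma integrable_id_mv {p : ℕ} (mv : Fin p → ℝ) {S : Matrix (Fin p) (Fin p) ℝ}
    (hS : S.PosSemidef) : Integrable (fun z => z) (mvGaussian mv hS) := by
  rw [mvGaussian, pi_eq]
  have hid : AEStronglyMeasurable (fun z : Fin p → ℝ => z)
      (Measure.map (fun w => mv + (psdSqrt hS).mulVec w) (Pi' p)) :=
    continuous_id.aestronglyMeasurable
  rw [integrable_map_measure hid (affine_cont mv (psdSqrt hS)).measurable.aemeasurable]
  have he : ((fun z : Fin p → ℝ => z) ∘ fun w : Fin p → ℝ => mv + (psdSqrt hS).mulVec w)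
      = fun w => mv + ∑ j, (w j) • (fun i => psdSqrt hS i j) := by
    funext w
    ext i
    simp [Matrix.mulVec, dotProduct, Finset.sum_apply, mul_comm]
  rw [he]
  exact (integrable_const mv).add
    (integrable_finset_sum _ fun j _ => (integrable_coord p j).smul_const _)

lemma mixture_identity (a1 a2 d σ : ℝ) (hsum : a1 + a2 = 1) (hβ : a1 * a2 = 1/6) :
    a1 * ((a2*d)^4 + 6*(a2*d)^2*σ + 3*σ^2) + a2 * ((-(a1*d))^4 + 6*(-(a1*d))^2*σ + 3*σ^2)
      = 3 * (a1 * ((a2*d)^2 + σ) + a2 * ((-(a1*d))^2 + σ))^2 := by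
  have h2 : a2 = 1 - a1 := by linarith
  subst h2
  linear_combination (-6 * a1 * (1 - a1) * d^4) * hβ


lemma mix_integral {α E : Type*} [MeasurableSpace α] [NormedAddCommGroup E] [NormedSpace ℝ E]
    (G1 G2 : Measure α) (a1 a2 : ℝ) (h1 : 0 ≤ a1) (h2 : 0 ≤ a2) (f : α → E)
    (hf1 : Integrable f G1) (hf2 : Integrable f G2) :
    Integrable f (ENNReal.ofReal a1 • G1 + ENNReal.ofReal a2 • G2) ∧
    ∫ x, f x ∂(ENNReal.ofReal a1 • G1 + ENNReal.ofReal a2 • G2)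
      = a1 • ∫ x, f x ∂G1 + a2 • ∫ x, f x ∂G2 := by
  have s1 : Integrable f (ENNReal.ofReal a1 • G1) := hf1.smul_measure ENNReal.ofReal_ne_top
  have s2 : Integrable f (ENNReal.ofReal a2 • G2) := hf2.smul_measure ENNReal.ofReal_ne_top
  refine ⟨s1.add_measure s2, ?_⟩
  rw [integral_add_measure s1 s2, integral_smul_measure, integral_smul_measure,
    ENNReal.toReal_ofReal h1, ENNReal.toReal_ofReal h2]

noncomputable def dotCLM {p : ℕ} (u : Fin p → ℝ) : (Fin p → ℝ) →L[ℝ] ℝ :=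
  LinearMap.toContinuousLinearMap
    { toFun := fun z => u ⬝ᵥ z
      map_add' := fun x y => dotProduct_add u x y
      map_smul' := fun c x => by
        simp only [RingHom.id_apply, smul_eq_mul]
        rw [dotProduct_smul]
        simp [smul_eq_mul] }


end Helpers

/-- if `α₁ ∈ {1/2 − 1/√12, 1/2 + 1/√12}`, then the excess kurtosis of every
projection of the two-component Gaussian mixture vanishes. -/
theorem stmt_15 (p : ℕ) (a1 a2 : ℝ) (ha1 : 0 < a1) (ha2 : 0 < a2) (hsum : a1 + a2 = 1)
    (m1 m2 : Fin p → ℝ) (hm : m1 ≠ m2)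
    (S : Matrix (Fin p) (Fin p) ℝ) (hS : S.PosDef)
    (ha : a1 = 1 / 2 - 1 / Real.sqrt 12 ∨ a1 = 1 / 2 + 1 / Real.sqrt 12) :
    let μ := ENNReal.ofReal a1 • mvGaussian m1 hS.posSemidef
        + ENNReal.ofReal a2 • mvGaussian m2 hS.posSemidef
    let m := ∫ z, z ∂μ
    let κ := fun u : Fin p → ℝ =>
      (∫ z, (u ⬝ᵥ (z - m)) ^ 4 ∂μ) / (∫ z, (u ⬝ᵥ (z - m)) ^ 2 ∂μ) ^ 2
    ∀ u : Fin p → ℝ, (∑ i, u i ^ 2) = 1 → κ u - 3 = 0 := by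
  intro μ m κ u hu
  have hμ : μ = ENNReal.ofReal a1 • mvGaussian m1 hS.posSemidef
      + ENNReal.ofReal a2 • mvGaussian m2 hS.posSemidef := rfl
  have hmdef : m = ∫ z, z ∂μ := rfl
  have hκ : κ u = (∫ z, (u ⬝ᵥ (z - m)) ^ 4 ∂μ) / (∫ z, (u ⬝ᵥ (z - m)) ^ 2 ∂μ) ^ 2 := rfl
  rw [hκ]
  -- basic setup
  have hu0 : u ≠ 0 := by
    intro h
    rw [h] at hu
    simp at hu
  set A := psdSqrt hS.posSemidef with hA
  set v := Matrix.vecMul u A with hv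
  set σ2 := v ⬝ᵥ v with hσ2def
  have hvne : v ≠ 0 := by
    intro h0
    have hAS : A * A = S := psdSqrt_mul_self hS.posSemidef
    have h1 : Matrix.vecMul u S = 0 := by
      rw [← hAS, ← Matrix.vecMul_vecMul, ← hv, h0, Matrix.zero_vecMul]
    have h2 := hS.dotProduct_mulVec_pos hu0
    have hst : star u = u := by ext i; simp
    rw [hst, dotProduct_mulVec, h1, zero_dotProduct] at h2
    exact lt_irrefl 0 h2
  have hσ2 : 0 < σ2 := by
    obtain ⟨i, hi⟩ := Function.ne_iff.1 hvne
    have : (0:ℝ) < ∑ i, v i * v i := by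
      refine Finset.sum_pos' (fun j _ => mul_self_nonneg _) ⟨i, Finset.mem_univ i, ?_⟩
      exact mul_self_pos.2 hi
    exact this
  -- pointwise rewriting of the pushforward integrands
  have hpt : ∀ (mv : Fin p → ℝ) (w : Fin p → ℝ),
      u ⬝ᵥ (mv + A.mulVec w) = u ⬝ᵥ mv + v ⬝ᵥ w := by
    intro mv w
    rw [dotProduct_add, dotProduct_mulVec, ← hv]
  set c1 := u ⬝ᵥ m1 with hc1
  set c2 := u ⬝ᵥ m2 with hc2
  -- mean computation
  have hid1 := integrable_id_mv m1 hS.posSemidef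
  have hid2 := integrable_id_mv m2 hS.posSemidef
  have hmixid := mix_integral _ _ a1 a2 ha1.le ha2.le _ hid1 hid2
  have hμint : Integrable (fun z => z) μ := by rw [hμ]; exact hmixid.1
  have hdotint : ∀ mv : Fin p → ℝ,
      Integrable (fun z => u ⬝ᵥ z) (mvGaussian mv hS.posSemidef) := by
    intro mv
    refine (mv_integrable_iff mv hS.posSemidef _ (cont_dot p u)).2 ?_
    have he : (fun w : Fin p → ℝ => u ⬝ᵥ (mv + A.mulVec w))
        = fun w => u ⬝ᵥ mv + v ⬝ᵥ w := funext fun w => hpt mv w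
    rw [he]
    exact pi_int1 p v _
  have hdotval : ∀ mv : Fin p → ℝ,
      ∫ z, u ⬝ᵥ z ∂(mvGaussian mv hS.posSemidef) = u ⬝ᵥ mv := by
    intro mv
    rw [mv_integral_eq mv hS.posSemidef _ (cont_dot p u)]
    have he : (fun w : Fin p → ℝ => u ⬝ᵥ (mv + A.mulVec w))
        = fun w => u ⬝ᵥ mv + v ⬝ᵥ w := funext fun w => hpt mv w
    rw [he]
    exact pi_m1 p v _
  have hum : u ⬝ᵥ m = a1 * c1 + a2 * c2 := by
    have h0 : u ⬝ᵥ m = ∫ z, u ⬝ᵥ z ∂μ := by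
      rw [hmdef, show u ⬝ᵥ (∫ z, z ∂μ) = dotCLM u (∫ z, z ∂μ) from rfl,
        ← ContinuousLinearMap.integral_comp_comm (dotCLM u) hμint]
      rfl
    rw [h0, hμ,
      (mix_integral _ _ a1 a2 ha1.le ha2.le _ (hdotint m1) (hdotint m2)).2,
      hdotval m1, hdotval m2, smul_eq_mul, smul_eq_mul]
  set um := u ⬝ᵥ m with humdef
  -- second and fourth moment integrands
  have hsub : (fun z : Fin p → ℝ => (u ⬝ᵥ (z - m)) ^ 2)
      = fun z => (u ⬝ᵥ z - um) ^ 2 := by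
    funext z; rw [dotProduct_sub]
  have hsub4 : (fun z : Fin p → ℝ => (u ⬝ᵥ (z - m)) ^ 4)
      = fun z => (u ⬝ᵥ z - um) ^ 4 := by
    funext z; rw [dotProduct_sub]
  have hcont2 : Continuous fun z : Fin p → ℝ => (u ⬝ᵥ z - um) ^ 2 :=
    ((cont_dot p u).sub continuous_const).pow 2
  have hcont4 : Continuous fun z : Fin p → ℝ => (u ⬝ᵥ z - um) ^ 4 :=
    ((cont_dot p u).sub continuous_const).pow 4
  have hmom2 : ∀ mv : Fin p → ℝ,
      Integrable (fun z => (u ⬝ᵥ z - um) ^ 2) (mvGaussian mv hS.posSemidef) ∧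
      ∫ z, (u ⬝ᵥ z - um) ^ 2 ∂(mvGaussian mv hS.posSemidef)
        = (u ⬝ᵥ mv - um) ^ 2 + σ2 := by
    intro mv
    have he : (fun w : Fin p → ℝ => (u ⬝ᵥ (mv + A.mulVec w) - um) ^ 2)
        = fun w => ((u ⬝ᵥ mv - um) + v ⬝ᵥ w) ^ 2 := by
      funext w; rw [hpt mv w]; ring_nf
    constructor
    · refine (mv_integrable_iff mv hS.posSemidef _ hcont2).2 ?_
      rw [he]; exact (pi_mom p v _).1
    · rw [mv_integral_eq mv hS.posSemidef _ hcont2, he]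
      exact (pi_mom p v _).2.2.1
  have hmom4 : ∀ mv : Fin p → ℝ,
      Integrable (fun z => (u ⬝ᵥ z - um) ^ 4) (mvGaussian mv hS.posSemidef) ∧
      ∫ z, (u ⬝ᵥ z - um) ^ 4 ∂(mvGaussian mv hS.posSemidef)
        = (u ⬝ᵥ mv - um) ^ 4 + 6 * (u ⬝ᵥ mv - um) ^ 2 * σ2 + 3 * σ2 ^ 2 := by
    intro mv
    have he : (fun w : Fin p → ℝ => (u ⬝ᵥ (mv + A.mulVec w) - um) ^ 4)
        = fun w => ((u ⬝ᵥ mv - um) + v ⬝ᵥ w) ^ 4 := by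
      funext w; rw [hpt mv w]; ring_nf
    constructor
    · refine (mv_integrable_iff mv hS.posSemidef _ hcont4).2 ?_
      rw [he]; exact (pi_mom p v _).2.1
    · rw [mv_integral_eq mv hS.posSemidef _ hcont4, he]
      exact (pi_mom p v _).2.2.2
  -- mixture moments
  have hE2 : ∫ z, (u ⬝ᵥ (z - m)) ^ 2 ∂μ
      = a1 * ((c1 - um) ^ 2 + σ2) + a2 * ((c2 - um) ^ 2 + σ2) := by
    rw [hsub, hμ,
      (mix_integral _ _ a1 a2 ha1.le ha2.le _ (hmom2 m1).1 (hmom2 m2).1).2,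
      (hmom2 m1).2, (hmom2 m2).2, smul_eq_mul, smul_eq_mul]
  have hE4 : ∫ z, (u ⬝ᵥ (z - m)) ^ 4 ∂μ
      = a1 * ((c1 - um) ^ 4 + 6 * (c1 - um) ^ 2 * σ2 + 3 * σ2 ^ 2)
        + a2 * ((c2 - um) ^ 4 + 6 * (c2 - um) ^ 2 * σ2 + 3 * σ2 ^ 2) := by
    rw [hsub4, hμ,
      (mix_integral _ _ a1 a2 ha1.le ha2.le _ (hmom4 m1).1 (hmom4 m2).1).2,
      (hmom4 m1).2, (hmom4 m2).2, smul_eq_mul, smul_eq_mul]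
  -- arithmetic
  have hβ : a1 * a2 = 1 / 6 := by
    have ht : (1 / Real.sqrt 12) ^ 2 = 1 / 12 := by
      rw [div_pow, one_pow, Real.sq_sqrt (by norm_num : (0:ℝ) ≤ 12)]
    have ha2' : a2 = 1 - a1 := by linarith
    rcases ha with h | h <;> rw [ha2', h] <;> linear_combination -ht
  have hb1 : c1 - um = a2 * (c1 - c2) := by
    rw [hum]; linear_combination (-c1) * hsum
  have hb2 : c2 - um = -(a1 * (c1 - c2)) := by
    rw [hum]; linear_combination (-c2) * hsum
  have hkey : ∫ z, (u ⬝ᵥ (z - m)) ^ 4 ∂μ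
      = 3 * (∫ z, (u ⬝ᵥ (z - m)) ^ 2 ∂μ) ^ 2 := by
    rw [hE4, hE2, hb1, hb2]
    exact mixture_identity a1 a2 (c1 - c2) σ2 hsum hβ
  have hE2pos : 0 < ∫ z, (u ⬝ᵥ (z - m)) ^ 2 ∂μ := by
    rw [hE2]
    nlinarith [sq_nonneg (c1 - um), sq_nonneg (c2 - um), hσ2, ha1, ha2, hsum]
  rw [hkey, mul_div_assoc, div_self (pow_ne_zero 2 hE2pos.ne'), mul_one]
  ring
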